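/- The triple map (a₁,a₂,a₃) ↦ (φ₁,φ₂,φ₃,A) with φ_k = a_k ∫_{−∞}^∞ dx/((1+a_k x²)√(P(x))) and A = (4π/3)(a₁a₂a₃)^{−1/2} sends (0,∞)³ into {(φ₁,φ₂,φ₃,A) : φ_k ∈ (0,π), φ₁+φ₂+φ₃ = π, A > 0}. -/

import Mathlib

open Real

/-- `p(x) = (1+a₁x²)(1+a₂x²)(1+a₃x²) − 1` for parameters `a = (a₁,a₂,a₃)`. -/
noncomputable def pfun (a : Fin 3 → ℝ) (x : ℝ) : ℝ :=
  (1 + a 0 * x ^ 2) * (1 + a 1 * x ^ 2) * (1 + a 2 * x ^ 2) - 1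

/-- `P(x) = p(x)/x²`. -/
noncomputable def Pfun (a : Fin 3 → ℝ) (x : ℝ) : ℝ := pfun a x / x ^ 2

/-- `φ_k = a_k ∫_{−∞}^{∞} dx / ((1 + a_k x²) √(P(x)))`. -/
noncomputable def phi (a : Fin 3 → ℝ) (k : Fin 3) : ℝ :=
  a k * ∫ x : ℝ, 1 / ((1 + a k * x ^ 2) * Real.sqrt (Pfun a x))

section Aux

open MeasureTheory Set Filter Topology

variable {a : Fin 3 → ℝ}

/-- the integrand of `φ_k` -/
noncomputable def fk (a : Fin 3 → ℝ) (k : Fin 3) (x : ℝ) : ℝ :=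
  1 / ((1 + a k * x ^ 2) * Real.sqrt (Pfun a x))

lemma Pfun_eq (x : ℝ) (hx : x ≠ 0) :
    Pfun a x = (a 0 + a 1 + a 2) + (a 0 * a 1 + a 0 * a 2 + a 1 * a 2) * x ^ 2
      + (a 0 * a 1 * a 2) * x ^ 4 := by
  unfold Pfun pfun
  field_simp
  ring

lemma Pfun_ge (ha : ∀ k, 0 < a k) (x : ℝ) (hx : x ≠ 0) :
    a 0 + a 1 + a 2 ≤ Pfun a x := by
  rw [Pfun_eq x hx]
  have h0 := ha 0; have h1 := ha 1; have h2 := ha 2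
  have t1 : 0 ≤ (a 0 * a 1 + a 0 * a 2 + a 1 * a 2) * x ^ 2 := by positivity
  have t2 : 0 ≤ (a 0 * a 1 * a 2) * x ^ 4 := by positivity
  linarith

lemma Pfun_pos (ha : ∀ k, 0 < a k) (x : ℝ) (hx : x ≠ 0) : 0 < Pfun a x := by
  have := Pfun_ge ha x hx
  have h0 := ha 0; have h1 := ha 1; have h2 := ha 2
  linarith

lemma fk_nonneg (ha : ∀ k, 0 < a k) (k : Fin 3) : ∀ x, 0 ≤ fk a k x := by
  intro x
  apply div_nonneg zero_le_one
  have h : 0 < 1 + a k * x ^ 2 := by nlinarith [ha k, sq_nonneg x]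
  exact mul_nonneg h.le (Real.sqrt_nonneg _)

lemma fk_pos (ha : ∀ k, 0 < a k) (k : Fin 3) (x : ℝ) (hx : x ≠ 0) : 0 < fk a k x := by
  apply div_pos one_pos
  have h : 0 < 1 + a k * x ^ 2 := by nlinarith [ha k, sq_nonneg x]
  exact mul_pos h (Real.sqrt_pos.2 (Pfun_pos ha x hx))

lemma fk_measurable (k : Fin 3) : Measurable (fk a k) := by
  unfold fk Pfun pfun
  fun_prop

lemma fk_integrable (ha : ∀ k, 0 < a k) (k : Fin 3) : Integrable (fk a k) := by
  set s : ℝ := a 0 + a 1 + a 2 with hs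
  have hspos : 0 < s := by have := ha 0; have := ha 1; have := ha 2; positivity
  set K : ℝ := max 1 (a k)⁻¹ with hK
  have hKpos : (0:ℝ) < K := lt_of_lt_of_le one_pos (le_max_left _ _)
  have hbound : Integrable (fun x : ℝ => (Real.sqrt s)⁻¹ * (K * (1 + x ^ 2)⁻¹)) := by
    exact (integrable_inv_one_add_sq.const_mul K).const_mul _
  refine hbound.mono ((fk_measurable k).aestronglyMeasurable) ?_
  have h0 : ∀ᵐ x : ℝ, x ≠ 0 := by
    have hset : {x : ℝ | ¬ x ≠ 0} = {0} := by ext y; simp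
    rw [ae_iff, hset]
    exact measure_singleton 0
  filter_upwards [h0] with x hx
  have hsP : Real.sqrt s ≤ Real.sqrt (Pfun a x) := Real.sqrt_le_sqrt (Pfun_ge ha x hx)
  have hss : 0 < Real.sqrt s := Real.sqrt_pos.2 hspos
  have hu : 0 < 1 + a k * x ^ 2 := by nlinarith [ha k, sq_nonneg x]
  have h1x : 0 < 1 + x ^ 2 := by positivity
  rw [Real.norm_eq_abs, Real.norm_eq_abs, abs_of_nonneg (fk_nonneg ha k x)]
  have step1 : fk a k x ≤ 1 / ((1 + a k * x ^ 2) * Real.sqrt s) := by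
    apply one_div_le_one_div_of_le (by positivity)
    exact mul_le_mul_of_nonneg_left hsP hu.le
  have step2 : 1 / ((1 + a k * x ^ 2) * Real.sqrt s)
      = (Real.sqrt s)⁻¹ * (1 + a k * x ^ 2)⁻¹ := by
    rw [one_div, mul_inv, mul_comm]
  have hK1 : (1:ℝ) ≤ K := le_max_left _ _
  have hKa : (1:ℝ) ≤ K * a k := by
    have h2 : (a k)⁻¹ ≤ K := le_max_right _ _
    have := inv_mul_cancel₀ (ne_of_gt (ha k))
    nlinarith [ha k]
  have key : 1 + x ^ 2 ≤ K * (1 + a k * x ^ 2) := by nlinarith [sq_nonneg x]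
  have step3 : (1 + a k * x ^ 2)⁻¹ ≤ K * (1 + x ^ 2)⁻¹ := by
    rw [← one_div, ← div_eq_mul_inv, div_le_div_iff₀ hu h1x]
    linarith
  have hgoal : fk a k x ≤ (Real.sqrt s)⁻¹ * (K * (1 + x ^ 2)⁻¹) := by
    calc fk a k x ≤ 1 / ((1 + a k * x ^ 2) * Real.sqrt s) := step1
      _ = (Real.sqrt s)⁻¹ * (1 + a k * x ^ 2)⁻¹ := step2
      _ ≤ (Real.sqrt s)⁻¹ * (K * (1 + x ^ 2)⁻¹) :=
          mul_le_mul_of_nonneg_left step3 (by positivity)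
  calc fk a k x ≤ (Real.sqrt s)⁻¹ * (K * (1 + x ^ 2)⁻¹) := hgoal
    _ ≤ ‖(Real.sqrt s)⁻¹ * (K * (1 + x ^ 2)⁻¹)‖ := le_abs_self _

/-- the sum of the three integrands -/
noncomputable def Fsum (a : Fin 3 → ℝ) (x : ℝ) : ℝ :=
  a 0 * fk a 0 x + a 1 * fk a 1 x + a 2 * fk a 2 x

lemma Fsum_integrable (ha : ∀ k, 0 < a k) : Integrable (Fsum a) := by
  exact (((fk_integrable ha 0).const_mul (a 0)).add
    ((fk_integrable ha 1).const_mul (a 1))).add ((fk_integrable ha 2).const_mul (a 2))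

lemma hasDerivAt_h (ha : ∀ k, 0 < a k) (x : ℝ) (hx : 0 < x) :
    HasDerivAt (fun y => Real.arctan (Real.sqrt (pfun a y))) (Fsum a x) x := by
  have hxne : x ≠ 0 := ne_of_gt hx
  have hppos : 0 < pfun a x := by
    have := Pfun_pos ha x hxne
    have h2 : pfun a x = Pfun a x * x ^ 2 := by
      unfold Pfun; field_simp
    rw [h2]; positivity
  have hu : ∀ k : Fin 3, HasDerivAt (fun y : ℝ => 1 + a k * y ^ 2) (a k * (2 * x)) x := by
    intro k
    have := ((hasDerivAt_pow 2 x).const_mul (a k)).const_add 1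
    simpa using this
  have hp : HasDerivAt (pfun a)
      ((a 0 * (2 * x) * (1 + a 1 * x ^ 2) + (1 + a 0 * x ^ 2) * (a 1 * (2 * x)))
        * (1 + a 2 * x ^ 2)
        + (1 + a 0 * x ^ 2) * (1 + a 1 * x ^ 2) * (a 2 * (2 * x))) x := by
    exact (((hu 0).mul (hu 1)).mul (hu 2)).sub_const 1
  set D : ℝ := (a 0 * (2 * x) * (1 + a 1 * x ^ 2) + (1 + a 0 * x ^ 2) * (a 1 * (2 * x)))
        * (1 + a 2 * x ^ 2)
        + (1 + a 0 * x ^ 2) * (1 + a 1 * x ^ 2) * (a 2 * (2 * x)) with hD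
  have hs : HasDerivAt (fun y => Real.sqrt (pfun a y)) (D / (2 * Real.sqrt (pfun a x))) x :=
    hp.sqrt (ne_of_gt hppos)
  have harct := (Real.hasDerivAt_arctan (Real.sqrt (pfun a x))).comp x hs
  refine harct.congr_deriv ?_
  set s : ℝ := Real.sqrt (pfun a x) with hsdef
  have hspos : 0 < s := Real.sqrt_pos.2 hppos
  have hs2 : s ^ 2 = pfun a x := Real.sq_sqrt hppos.le
  have hsx : Real.sqrt (Pfun a x) = s / x := by
    unfold Pfun
    rw [Real.sqrt_div hppos.le, Real.sqrt_sq hx.le]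
  have h1s : 1 + s ^ 2 = (1 + a 0 * x ^ 2) * (1 + a 1 * x ^ 2) * (1 + a 2 * x ^ 2) := by
    rw [hs2]; unfold pfun; ring
  have hu0 : (0:ℝ) < 1 + a 0 * x ^ 2 := by nlinarith [ha 0, sq_nonneg x]
  have hu1 : (0:ℝ) < 1 + a 1 * x ^ 2 := by nlinarith [ha 1, sq_nonneg x]
  have hu2 : (0:ℝ) < 1 + a 2 * x ^ 2 := by nlinarith [ha 2, sq_nonneg x]
  unfold Fsum fk
  rw [hsx, hD]
  rw [h1s]
  field_simp
  have e1 : (1 + x ^ 2 * a 1) ≠ 0 := by rw [mul_comm]; exact hu1.ne'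
  have e2 : (1 + x ^ 2 * a 2) ≠ 0 := by rw [mul_comm]; exact hu2.ne'
  field_simp

lemma integral_Fsum_Ioi (ha : ∀ k, 0 < a k) : ∫ x in Ioi (0:ℝ), Fsum a x = π / 2 := by
  have hcont : ContinuousWithinAt (fun y => Real.arctan (Real.sqrt (pfun a y))) (Ici 0) 0 := by
    apply Continuous.continuousWithinAt
    apply Real.continuous_arctan.comp
    apply Real.continuous_sqrt.comp
    unfold pfun; continuity
  have hderiv : ∀ x ∈ Ioi (0:ℝ),
      HasDerivAt (fun y => Real.arctan (Real.sqrt (pfun a y))) (Fsum a x) x :=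
    fun x hx => hasDerivAt_h ha x hx
  have hint : IntegrableOn (Fsum a) (Ioi 0) := (Fsum_integrable ha).integrableOn
  have hpt : Tendsto (pfun a) atTop atTop := by
    apply tendsto_atTop_mono (f := fun x : ℝ => a 0 * x ^ 2)
    · intro x
      unfold pfun
      nlinarith [ha 0, ha 1, ha 2, sq_nonneg x, sq_nonneg (x^2), sq_nonneg (x^3),
        mul_pos (ha 1) (ha 2), mul_pos (ha 0) (mul_pos (ha 1) (ha 2)),
        mul_pos (ha 0) (ha 1), mul_pos (ha 0) (ha 2)]
    · exact (tendsto_pow_atTop two_ne_zero).const_mul_atTop (ha 0)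
  have hsq : Tendsto Real.sqrt atTop atTop := by
    apply tendsto_atTop_atTop_of_monotone (fun x y h => Real.sqrt_le_sqrt h)
    intro b
    exact ⟨(max b 0) ^ 2, by rw [Real.sqrt_sq (le_max_right b 0)]; exact le_max_left b 0⟩
  have harc : Tendsto Real.arctan atTop (𝓝 (π / 2)) :=
    tendsto_nhds_of_tendsto_nhdsWithin Real.tendsto_arctan_atTop
  have htend : Tendsto (fun y => Real.arctan (Real.sqrt (pfun a y))) atTop (𝓝 (π / 2)) :=
    harc.comp (hsq.comp hpt)
  have := integral_Ioi_of_hasDerivAt_of_tendsto hcont hderiv hint htend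
  rw [this]
  have : pfun a 0 = 0 := by unfold pfun; ring
  rw [this]
  simp

lemma integral_Fsum (ha : ∀ k, 0 < a k) : ∫ x, Fsum a x = π := by
  have heven : ∀ x : ℝ, Fsum a |x| = Fsum a x := by
    intro x
    unfold Fsum fk Pfun pfun
    simp only [sq_abs]
  calc ∫ x, Fsum a x = ∫ x : ℝ, Fsum a |x| := by simp only [heven]
    _ = 2 * ∫ x in Ioi (0:ℝ), Fsum a x := integral_comp_abs
    _ = π := by rw [integral_Fsum_Ioi ha]; ring

lemma fk_integral_pos (ha : ∀ k, 0 < a k) (k : Fin 3) : 0 < ∫ x, fk a k x := by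
  refine (integral_pos_iff_support_of_nonneg (fk_nonneg ha k) (fk_integrable ha k)).2 ?_
  have hsub : Ioi (0:ℝ) ⊆ Function.support (fk a k) :=
    fun x hx => (fk_pos ha k x (ne_of_gt hx)).ne'
  calc (0 : ENNReal) < ⊤ := by simp
    _ = volume (Ioi (0:ℝ)) := Real.volume_Ioi.symm
    _ ≤ volume (Function.support (fk a k)) := measure_mono hsub

lemma phi_eq (k : Fin 3) : phi a k = ∫ x, a k * fk a k x := by
  unfold phi fk
  rw [MeasureTheory.integral_const_mul]

lemma phi_pos (ha : ∀ k, 0 < a k) (k : Fin 3) : 0 < phi a k :=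
  mul_pos (ha k) (fk_integral_pos ha k)

lemma phi_sum (ha : ∀ k, 0 < a k) : phi a 0 + phi a 1 + phi a 2 = π := by
  have h0 := (fk_integrable ha 0).const_mul (a 0)
  have h1 := (fk_integrable ha 1).const_mul (a 1)
  have h2 := (fk_integrable ha 2).const_mul (a 2)
  have hsplit : ∫ x, Fsum a x
      = (∫ x, a 0 * fk a 0 x) + (∫ x, a 1 * fk a 1 x) + (∫ x, a 2 * fk a 2 x) := by
    have h01 : Integrable (fun x => a 0 * fk a 0 x + a 1 * fk a 1 x) volume := h0.add h1
    unfold Fsum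
    rw [MeasureTheory.integral_add h01 h2, MeasureTheory.integral_add h0 h1]
  rw [phi_eq, phi_eq, phi_eq, ← hsplit]
  exact integral_Fsum ha

end Aux

theorem stmt_14 (a : Fin 3 → ℝ) (ha : ∀ k, 0 < a k) :
    (∀ k, phi a k ∈ Set.Ioo 0 π) ∧
    phi a 0 + phi a 1 + phi a 2 = π ∧
    0 < (4 * π / 3) * (a 0 * a 1 * a 2) ^ (-(1 : ℝ) / 2) := by
  have h0 := phi_pos ha 0
  have h1 := phi_pos ha 1
  have h2 := phi_pos ha 2
  have hsum := phi_sum ha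
  refine ⟨fun k => ⟨phi_pos ha k, ?_⟩, hsum, ?_⟩
  · fin_cases k <;> simp_all <;> linarith
  · have hpi := Real.pi_pos
    have ha0 := ha 0; have ha1 := ha 1; have ha2 := ha 2
    have hr := Real.rpow_pos_of_pos
      (show (0:ℝ) < a 0 * a 1 * a 2 by positivity) (-(1:ℝ)/2)
    exact mul_pos (by positivity) hr
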